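/- (Erdős, Theorem B) There exists a positive constant c such that for all positive integers x ≤ y with x sufficiently large, there exists a pair of integers i, j with 0 ≤ i, j ≤ c·log x / log log x such that gcd(x+i, y+j) = 1. -/

import Mathlib

open Finset

lemma count_mult_le (x k p : ℕ) (hp : 0 < p) :
    ((Finset.range (k+1)).filter (fun i => p ∣ x + i)).card ≤ k / p + 2 := by
  have hinj : Set.InjOn (fun i => (x + i) / p)
      ((Finset.range (k+1)).filter (fun i => p ∣ x + i)) := by
    intro a ha b hb hab
    simp only [Finset.coe_filter, Set.mem_setOf_eq, Finset.mem_range] at ha hb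
    have hda := Nat.div_mul_cancel ha.2
    have hdb := Nat.div_mul_cancel hb.2
    have : x + a = x + b := by
      rw [← hda, ← hdb]
      simp only at hab
      rw [hab]
    omega
  have hmaps : ∀ i ∈ (Finset.range (k+1)).filter (fun i => p ∣ x + i),
      (x + i) / p ∈ Finset.Icc (x / p) ((x + k) / p) := by
    intro i hi
    simp only [Finset.mem_filter, Finset.mem_range] at hi
    refine Finset.mem_Icc.2 ⟨Nat.div_le_div_right (Nat.le_add_right _ _),
      Nat.div_le_div_right (by omega)⟩
  have hc := Finset.card_le_card_of_injOn _ hmaps hinj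
  have h2 : (x + k) / p ≤ x / p + k / p + 1 := by
    rw [Nat.add_div hp]; split <;> omega
  have hIcc : (Finset.Icc (x / p) ((x + k) / p)).card = (x+k)/p + 1 - x/p := by
    rw [Nat.card_Icc]
  have h3 : x / p ≤ (x + k) / p := Nat.div_le_div_right (by omega)
  omega

lemma count_mult_le_one (x k p : ℕ) (hk : k < p) {a b : ℕ} (ha : a ≤ k) (hb : b ≤ k)
    (hda : p ∣ x + a) (hdb : p ∣ x + b) : a = b := by
  rcases le_total a b with h | h
  · have hd := Nat.dvd_sub hdb hda
    have h1 : x + b - (x + a) = b - a := by omega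
    rw [h1] at hd
    rcases Nat.eq_zero_or_pos (b - a) with h0 | h0
    · omega
    · have := Nat.le_of_dvd h0 hd; omega
  · have hd := Nat.dvd_sub hda hdb
    have h1 : x + a - (x + b) = a - b := by omega
    rw [h1] at hd
    rcases Nat.eq_zero_or_pos (a - b) with h0 | h0
    · omega
    · have := Nat.le_of_dvd h0 hd; omega

-- number of prime factors > k is at most Nat.log k n
lemma large_prime_factors_le (k n : ℕ) (hk : 2 ≤ k) (hn : n ≠ 0) :
    (n.primeFactors.filter (fun p => k < p)).card ≤ Nat.log k n := by
  set S := n.primeFactors.filter (fun p => k < p) with hS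
  have hdvd : ∏ p ∈ S, p ∣ n :=
    dvd_trans (Finset.prod_dvd_prod_of_subset _ _ _ (Finset.filter_subset _ _))
      (Nat.prod_primeFactors_dvd n)
  have hpow : k ^ S.card ≤ ∏ p ∈ S, p := by
    apply Finset.pow_card_le_prod
    intro p hp
    simp only [hS, Finset.mem_filter] at hp
    omega
  have hle : k ^ S.card ≤ n := hpow.trans (Nat.le_of_dvd (Nat.pos_of_ne_zero hn) hdvd)
  exact (Nat.le_log_iff_pow_le (by omega) hn).2 hle
lemma sum_inv_sq_le (k : ℕ) : ∑ n ∈ Finset.Icc 2 k, (1 : ℝ) / (n : ℝ)^2 ≤ 3/4 := by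
  have key : ∀ m : ℕ, 2 ≤ m → ∑ n ∈ Finset.Icc 2 m, (1 : ℝ) / (n : ℝ)^2 ≤ 3/4 - 1/m := by
    intro m hm
    induction m with
    | zero => omega
    | succ m ih =>
      rcases Nat.lt_or_ge m 2 with h | h
      · interval_cases m
        · omega
        · norm_num
      · rw [Finset.sum_Icc_succ_top (by omega)]
        have h1 : (1:ℝ)/((m:ℝ)+1)^2 ≤ 1/m - 1/(m+1) := by
          have hm0 : (0:ℝ) < m := by positivity
          rw [div_sub_div _ _ (ne_of_gt hm0) (by positivity)]
          rw [div_le_div_iff₀ (by positivity) (by positivity)]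
          ring_nf
          nlinarith
        have := ih h
        push_cast
        push_cast at this h1
        linarith
  rcases Nat.lt_or_ge k 2 with h | h
  · have : Finset.Icc 2 k = ∅ := by
      apply Finset.Icc_eq_empty; omega
    simp [this]; norm_num
  · have := key k h
    have hk0 : (0:ℝ) < k := by positivity
    have : (0:ℝ) < 1/k := by positivity
    linarith [key k h]

lemma sum_inv_le_sqrt (k : ℕ) : ∑ n ∈ Finset.Icc 1 k, (1 : ℝ) / n ≤ 2 * Real.sqrt k := by
  induction k with
  | zero => simp
  | succ k ih =>
    rw [Finset.sum_Icc_succ_top (by omega)]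
    have hs : Real.sqrt ((k:ℝ)+1) ^ 2 = (k:ℝ)+1 := Real.sq_sqrt (by positivity)
    have hs2 : Real.sqrt (k:ℝ) ^ 2 = (k:ℝ) := Real.sq_sqrt (by positivity)
    have h1 : (1:ℝ)/((k:ℝ)+1) ≤ 2 * Real.sqrt ((k:ℝ)+1) - 2 * Real.sqrt (k:ℝ) := by
      have hpos : (0:ℝ) < Real.sqrt ((k:ℝ)+1) := Real.sqrt_pos.2 (by positivity)
      have hge : (0:ℝ) ≤ Real.sqrt (k:ℝ) := Real.sqrt_nonneg _
      have ha1 : (1:ℝ) ≤ Real.sqrt ((k:ℝ)+1) := by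
        nlinarith [hs, hpos, sq_nonneg (Real.sqrt ((k:ℝ)+1) - 1)]
      rw [div_le_iff₀ (by positivity)]
      nlinarith [mul_nonneg (mul_nonneg (sub_nonneg.2 (Real.sqrt_le_sqrt (show (k:ℝ) ≤ (k:ℝ)+1 by linarith))) (sub_nonneg.2 (Real.sqrt_le_sqrt (show (k:ℝ) ≤ (k:ℝ)+1 by linarith)))) hge]
    push_cast
    push_cast at ih h1
    linarith
theorem key_count (x y k : ℕ) (hk : 2 ≤ k) (hx : 1 ≤ x)
    (hbad : ∀ i j, i ≤ k → j ≤ k → Nat.gcd (x+i) (y+j) ≠ 1) :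
    (k+1)^2 ≤ (∑ p ∈ (Finset.range (k+1)).filter Nat.Prime, (k/p+2)^2)
      + (k+1) * Nat.log k (x+k) := by
  classical
  set S : Finset (ℕ × ℕ) := Finset.range (k+1) ×ˢ Finset.range (k+1) with hSdef
  have hScard : S.card = (k+1)^2 := by
    simp [hSdef, Finset.card_product, sq]
  set Small : Finset (ℕ × ℕ) :=
    S.filter (fun q => ∃ p, p.Prime ∧ p ≤ k ∧ p ∣ x+q.1 ∧ p ∣ y+q.2) with hSm
  set Large : Finset (ℕ × ℕ) :=
    S.filter (fun q => ∃ p, p.Prime ∧ k < p ∧ p ∣ x+q.1 ∧ p ∣ y+q.2) with hLg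
  have hsub : S ⊆ Small ∪ Large := by
    intro q hq
    have hq1 : q.1 ≤ k ∧ q.2 ≤ k := by
      rw [hSdef] at hq
      simp only [Finset.mem_product, Finset.mem_range] at hq
      omega
    have hg := hbad q.1 q.2 hq1.1 hq1.2
    set g := Nat.gcd (x+q.1) (y+q.2) with hgdef
    have hg0 : g ≠ 0 := by
      intro h0
      have := Nat.eq_zero_of_gcd_eq_zero_left (hgdef ▸ h0)
      omega
    have hp : (g.minFac).Prime := Nat.minFac_prime hg
    have hpd1 : g.minFac ∣ x + q.1 := (Nat.minFac_dvd g).trans (Nat.gcd_dvd_left _ _)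
    have hpd2 : g.minFac ∣ y + q.2 := (Nat.minFac_dvd g).trans (Nat.gcd_dvd_right _ _)
    rcases le_or_gt g.minFac k with h | h
    · exact Finset.mem_union_left _ (Finset.mem_filter.2 ⟨hq, g.minFac, hp, h, hpd1, hpd2⟩)
    · exact Finset.mem_union_right _ (Finset.mem_filter.2 ⟨hq, g.minFac, hp, h, hpd1, hpd2⟩)
  have hcard : (k+1)^2 ≤ Small.card + Large.card := by
    calc (k+1)^2 = S.card := hScard.symm
    _ ≤ (Small ∪ Large).card := Finset.card_le_card hsub
    _ ≤ Small.card + Large.card := Finset.card_union_le _ _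
  -- bound Small
  set P : Finset ℕ := (Finset.range (k+1)).filter Nat.Prime with hP
  have hSmall : Small.card ≤ ∑ p ∈ P, (k/p+2)^2 := by
    have hsub2 : Small ⊆ P.biUnion (fun p => S.filter (fun q => p ∣ x+q.1 ∧ p ∣ y+q.2)) := by
      intro q hq
      rw [hSm, Finset.mem_filter] at hq
      obtain ⟨p, hp, hpk, hd1, hd2⟩ := hq.2
      exact Finset.mem_biUnion.2 ⟨p, Finset.mem_filter.2 ⟨Finset.mem_range.2 (by omega), hp⟩,
        Finset.mem_filter.2 ⟨hq.1, hd1, hd2⟩⟩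
    refine (Finset.card_le_card hsub2).trans ((Finset.card_biUnion_le).trans ?_)
    apply Finset.sum_le_sum
    intro p hp
    have hpp : p.Prime := (Finset.mem_filter.1 hp).2
    have hfp : S.filter (fun q => p ∣ x+q.1 ∧ p ∣ y+q.2)
        = ((Finset.range (k+1)).filter (fun i => p ∣ x + i))
          ×ˢ ((Finset.range (k+1)).filter (fun j => p ∣ y + j)) := by
      rw [hSdef]
      exact Finset.filter_product (fun i => p ∣ x + i) (fun j => p ∣ y + j)
    rw [hfp, Finset.card_product, sq]
    exact Nat.mul_le_mul (count_mult_le x k p hpp.pos) (count_mult_le y k p hpp.pos)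
  -- bound Large
  have hLarge : Large.card ≤ (k+1) * Nat.log k (x+k) := by
    set T : Finset (ℕ × ℕ) := (Finset.range (k+1)).biUnion
      (fun i => ({i} : Finset ℕ) ×ˢ ((x+i).primeFactors.filter (fun p => k < p))) with hT
    have hf : ∀ q ∈ Large, ∃ p, p.Prime ∧ k < p ∧ p ∣ x+q.1 ∧ p ∣ y+q.2 := by
      intro q hq; exact (Finset.mem_filter.1 hq).2
    set f : ℕ × ℕ → ℕ × ℕ := fun q =>
      if h : ∃ p, p.Prime ∧ k < p ∧ p ∣ x+q.1 ∧ p ∣ y+q.2 then (q.1, h.choose) else (0,0)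
      with hfdef
    have hmaps : ∀ q ∈ Large, f q ∈ T := by
      intro q hq
      have h := hf q hq
      obtain ⟨hp, hkp, hd1, hd2⟩ := h.choose_spec
      have hq1 : q.1 ≤ k := by
        have := (Finset.mem_filter.1 hq).1
        rw [hSdef] at this
        simp only [Finset.mem_product, Finset.mem_range] at this
        omega
      rw [hfdef]; simp only [h, dif_pos]
      refine Finset.mem_biUnion.2 ⟨q.1, Finset.mem_range.2 (by omega), ?_⟩
      refine Finset.mem_product.2 ⟨Finset.mem_singleton_self _, ?_⟩
      refine Finset.mem_filter.2 ⟨Nat.mem_primeFactors.2 ⟨hp, hd1, by omega⟩, hkp⟩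
    have hinj : Set.InjOn f Large := by
      intro q hq q' hq' heq
      have h := hf q (by simpa using hq)
      have h' := hf q' (by simpa using hq')
      rw [hfdef] at heq
      simp only [h, h', dif_pos] at heq
      simp only [Prod.mk.injEq] at heq
      obtain ⟨h1, h2⟩ := heq
      obtain ⟨hp, hkp, hd1, hd2⟩ := h.choose_spec
      obtain ⟨hp', hkp', hd1', hd2'⟩ := h'.choose_spec
      rw [← h2] at hd2'
      have hq2 : q.2 ≤ k ∧ q'.2 ≤ k := by
        have a1 := (Finset.mem_filter.1 (by simpa using hq : q ∈ Large)).1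
        have a2 := (Finset.mem_filter.1 (by simpa using hq' : q' ∈ Large)).1
        rw [hSdef] at a1 a2
        simp only [Finset.mem_product, Finset.mem_range] at a1 a2
        omega
      have h3 : q.2 = q'.2 := count_mult_le_one y k h.choose hkp hq2.1 hq2.2 hd2 hd2'
      exact Prod.ext h1 h3
    have hcardT : T.card ≤ (k+1) * Nat.log k (x+k) := by
      refine (Finset.card_biUnion_le).trans ?_
      have : ∀ i ∈ Finset.range (k+1),
          (({i} : Finset ℕ) ×ˢ ((x+i).primeFactors.filter (fun p => k < p))).card
            ≤ Nat.log k (x+k) := by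
        intro i hi
        rw [Finset.card_product, Finset.card_singleton, one_mul]
        refine (large_prime_factors_le k (x+i) hk (by omega)).trans ?_
        exact Nat.log_mono_right (by simp only [Finset.mem_range] at hi; omega)
      calc ∑ i ∈ Finset.range (k+1), _ ≤ ∑ i ∈ Finset.range (k+1), Nat.log k (x+k) :=
            Finset.sum_le_sum this
        _ = (k+1) * Nat.log k (x+k) := by rw [Finset.sum_const, Finset.card_range, smul_eq_mul]
    exact (Finset.card_le_card_of_injOn f hmaps hinj).trans hcardT
  omega
lemma no_bad (x y k : ℕ) (hx : 1 ≤ x) (hk : 10000 ≤ k)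
    (hlog : (Nat.log k (x+k) : ℝ) ≤ ((k:ℝ)+1)/25)
    (hbad : ∀ i j, i ≤ k → j ≤ k → Nat.gcd (x+i) (y+j) ≠ 1) : False := by
  classical
  have hkey := key_count x y k (by omega) hx hbad
  have hkR : (10000:ℝ) ≤ (k:ℝ) := by exact_mod_cast hk
  set P : Finset ℕ := (Finset.range (k+1)).filter Nat.Prime with hP
  have hkeyR : ((((k+1)^2 : ℕ)) : ℝ)
      ≤ (((∑ p ∈ P, (k/p+2)^2) + (k+1) * Nat.log k (x+k) : ℕ) : ℝ) :=
    Nat.cast_le.mpr hkey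
  push_cast at hkeyR
  -- now hkeyR : ((k:ℝ)+1)^2 ≤ ∑ p ∈ P, (↑(k/p)+2)^2 + (↑k+1) * ↑(Nat.log k (x+k))
  have hPsub : P ⊆ Finset.Icc 2 k := by
    intro p hp
    simp only [hP, Finset.mem_filter, Finset.mem_range] at hp
    exact Finset.mem_Icc.2 ⟨hp.2.two_le, by omega⟩
  have hsum1 : ∑ p ∈ P, ((((k/p : ℕ)):ℝ) + 2)^2
      ≤ (3/4) * (k:ℝ)^2 + 8 * (k:ℝ) * Real.sqrt k + 4 * ((k:ℝ)+1) := by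
    have hterm : ∀ p ∈ P, ((((k/p : ℕ)):ℝ) + 2)^2
        ≤ (k:ℝ)^2 * (1/(p:ℝ)^2) + 4*(k:ℝ) * (1/(p:ℝ)) + 4 := by
      intro p hp
      have hp2 : 2 ≤ p := ((Finset.mem_filter.1 hp).2).two_le
      have hppos : (0:ℝ) < p := by positivity
      have h1 : (((k/p : ℕ)):ℝ) ≤ (k:ℝ)/(p:ℝ) := Nat.cast_div_le
      have h0 : (0:ℝ) ≤ (((k/p : ℕ)):ℝ) := by positivity
      have hkp : (0:ℝ) ≤ (k:ℝ)/(p:ℝ) := by positivity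
      calc ((((k/p : ℕ)):ℝ) + 2)^2 ≤ ((k:ℝ)/(p:ℝ) + 2)^2 := by nlinarith
        _ = (k:ℝ)^2 * (1/(p:ℝ)^2) + 4*(k:ℝ) * (1/(p:ℝ)) + 4 := by
            field_simp; ring
    calc ∑ p ∈ P, ((((k/p : ℕ)):ℝ) + 2)^2
        ≤ ∑ p ∈ P, ((k:ℝ)^2 * (1/(p:ℝ)^2) + 4*(k:ℝ) * (1/(p:ℝ)) + 4) :=
          Finset.sum_le_sum hterm
      _ = (k:ℝ)^2 * (∑ p ∈ P, 1/(p:ℝ)^2) + 4*(k:ℝ) * (∑ p ∈ P, 1/(p:ℝ)) + 4 * P.card := by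
          rw [Finset.sum_add_distrib, Finset.sum_add_distrib, Finset.mul_sum,
            Finset.mul_sum, Finset.sum_const]
          push_cast; ring
      _ ≤ (k:ℝ)^2 * (3/4) + 4*(k:ℝ) * (2 * Real.sqrt k) + 4 * ((k:ℝ)+1) := by
          have e1 : ∑ p ∈ P, 1/(p:ℝ)^2 ≤ 3/4 := by
            refine le_trans (Finset.sum_le_sum_of_subset_of_nonneg hPsub ?_) (sum_inv_sq_le k)
            intro i _ _; positivity
          have e2 : ∑ p ∈ P, 1/(p:ℝ) ≤ 2 * Real.sqrt k := by
            refine le_trans (Finset.sum_le_sum_of_subset_of_nonneg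
              (hPsub.trans (Finset.Icc_subset_Icc_left (by norm_num))) ?_) (sum_inv_le_sqrt k)
            intro i _ _; positivity
          have e3 : (P.card : ℝ) ≤ (k:ℝ)+1 := by
            have : P.card ≤ k + 1 := by
              calc P.card ≤ (Finset.range (k+1)).card := Finset.card_filter_le _ _
                _ = k + 1 := Finset.card_range _
            exact_mod_cast this
          have hk0 : (0:ℝ) ≤ (k:ℝ) := by positivity
          nlinarith [Real.sqrt_nonneg (k:ℝ)]
      _ = (3/4) * (k:ℝ)^2 + 8 * (k:ℝ) * Real.sqrt k + 4 * ((k:ℝ)+1) := by ring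
  have hsqk : Real.sqrt k ≤ (k:ℝ)/100 := by
    have h1 : (100:ℝ) ≤ Real.sqrt k := by
      rw [Real.le_sqrt (by norm_num) (by positivity)]
      nlinarith
    have h2 : Real.sqrt k ^ 2 = (k:ℝ) := Real.sq_sqrt (by positivity)
    nlinarith
  have hprod : ((k:ℝ)+1) * (Nat.log k (x+k) : ℝ) ≤ ((k:ℝ)+1) * (((k:ℝ)+1)/25) :=
    mul_le_mul_of_nonneg_left hlog (by positivity)
  nlinarith [Real.sqrt_nonneg (k:ℝ)]

/-- Erdős, Theorem B: there is c > 0 such that for all sufficiently large x and all y ≥ x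
    there exist 0 ≤ i, j ≤ c·log x / log log x with gcd(x+i, y+j) = 1. -/
theorem erdos_theorem_B :
    ∃ c : ℝ, 0 < c ∧ ∃ N : ℕ, ∀ x y : ℕ, N ≤ x → x ≤ y →
      ∃ i j : ℕ,
        (i : ℝ) ≤ c * Real.log x / Real.log (Real.log x) ∧
        (j : ℝ) ≤ c * Real.log x / Real.log (Real.log x) ∧
        Nat.gcd (x + i) (y + j) = 1 := by
  classical
  refine ⟨100, by norm_num, ⌈Real.exp 50000⌉₊ + 2, fun x y hNx hxy => ?_⟩
  have hx0 : 0 < x := by omega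
  have hxR : Real.exp 50000 ≤ (x : ℝ) := by
    calc Real.exp 50000 ≤ (⌈Real.exp 50000⌉₊ : ℝ) := Nat.le_ceil _
      _ ≤ (x : ℝ) := by exact_mod_cast le_trans (by omega) hNx
  set L : ℝ := Real.log x with hLdef
  have hL : 50000 ≤ L := by
    calc (50000:ℝ) = Real.log (Real.exp 50000) := (Real.log_exp _).symm
      _ ≤ L := Real.log_le_log (Real.exp_pos _) hxR
  set l : ℝ := Real.log L with hldef
  have hsqrtL : 223 ≤ Real.sqrt L := by
    rw [Real.le_sqrt (by norm_num) (by linarith)]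
    norm_num
    linarith
  have hsL : Real.sqrt L ^ 2 = L := Real.sq_sqrt (by linarith)
  have hsLpos : 0 < Real.sqrt L := by linarith
  have hl_le : l ≤ 2 * Real.sqrt L := by
    have h1 : Real.log (Real.sqrt L) ≤ Real.sqrt L - 1 :=
      Real.log_le_sub_one_of_pos hsLpos
    have h2 : Real.log (Real.sqrt L) = l / 2 := by
      rw [hldef, Real.log_sqrt (by linarith)]
    linarith
  have hl10 : 10 ≤ l := by
    have he : Real.exp 10 ≤ 50000 := by
      have h1 : Real.exp 10 = Real.exp 1 ^ 10 := by
        rw [← Real.exp_nat_mul]; norm_num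
      have h2 : Real.exp 1 ^ 10 ≤ 2.7182818286 ^ 10 :=
        pow_le_pow_left₀ (Real.exp_pos 1).le Real.exp_one_lt_d9.le 10
      have h3 : (2.7182818286:ℝ) ^ 10 ≤ 50000 := by norm_num
      linarith
    calc (10:ℝ) = Real.log (Real.exp 10) := (Real.log_exp _).symm
      _ ≤ l := Real.log_le_log (Real.exp_pos _) (by linarith)
  have hlpos : 0 < l := by linarith
  have hLl : Real.sqrt L / 2 ≤ L / l := by
    rw [div_le_div_iff₀ (by norm_num) hlpos]
    nlinarith
  set v : ℝ := 100 * L / l with hvdef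
  have hv_pos : 0 < v := by positivity
  have hv_eq : v = 100 * (L / l) := by rw [hvdef]; ring
  have hv_ge : 50 * Real.sqrt L ≤ v := by rw [hv_eq]; linarith
  set k : ℕ := ⌊v⌋₊ with hkdef
  have hk_le_v : (k : ℝ) ≤ v := Nat.floor_le hv_pos.le
  have hv_lt : v < (k : ℝ) + 1 := Nat.lt_floor_add_one v
  have hk_ge : 10000 ≤ k := by
    apply Nat.le_floor
    push_cast
    linarith
  have hkR : (10000:ℝ) ≤ (k:ℝ) := by exact_mod_cast hk_ge
  -- k ≤ x
  have hxexp : (x:ℝ) = Real.exp L := (Real.exp_log (by exact_mod_cast hx0)).symm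
  have hx_ge : 10 * L ≤ (x:ℝ) := by
    have h1 : 1 + L/2 ≤ Real.exp (L/2) := by linarith [Real.add_one_le_exp (L/2)]
    have h2 : (x:ℝ) = Real.exp (L/2) ^ 2 := by
      rw [hxexp, ← Real.exp_nat_mul]
      congr 1
      push_cast
      ring
    nlinarith [Real.exp_pos (L/2)]
  have hk_le_x : k ≤ x := by
    have h1 : (k:ℝ) ≤ 10 * L := by
      have : v ≤ 10 * L := by
        rw [hvdef, div_le_iff₀ hlpos]; nlinarith
      linarith
    have : (k:ℝ) ≤ (x:ℝ) := h1.trans hx_ge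
    exact_mod_cast this
  -- log (x + k) ≤ 2 L
  have hx2 : (2:ℝ) ≤ (x:ℝ) := by linarith
  have hlog_xk : Real.log ((x:ℝ) + (k:ℝ)) ≤ 2 * L := by
    have hkx : (k:ℝ) ≤ (x:ℝ) := by exact_mod_cast hk_le_x
    have h1 : (x:ℝ) + (k:ℝ) ≤ (x:ℝ)^2 := by nlinarith
    calc Real.log ((x:ℝ) + (k:ℝ)) ≤ Real.log ((x:ℝ)^2) :=
          Real.log_le_log (by positivity) h1
      _ = 2 * L := by rw [Real.log_pow]; push_cast; ring
  -- log k ≥ l / 2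
  have hk_ge_sqrtL : Real.sqrt L ≤ (k:ℝ) := by linarith
  have hlogk : l / 2 ≤ Real.log k := by
    have h1 : Real.log (Real.sqrt L) ≤ Real.log k :=
      Real.log_le_log hsLpos hk_ge_sqrtL
    rw [Real.log_sqrt (by linarith)] at h1
    linarith
  -- Nat.log bound
  have hlog : (Nat.log k (x+k) : ℝ) ≤ ((k:ℝ)+1)/25 := by
    set m : ℕ := Nat.log k (x+k) with hm
    have h1 : k ^ m ≤ x + k := Nat.pow_log_le_self k (by omega)
    have h2 : ((k:ℝ)) ^ m ≤ (x:ℝ) + (k:ℝ) := by exact_mod_cast h1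
    have h3 : (m:ℝ) * Real.log k ≤ Real.log ((x:ℝ)+(k:ℝ)) := by
      calc (m:ℝ) * Real.log k = Real.log ((k:ℝ)^m) := (Real.log_pow _ _).symm
        _ ≤ Real.log ((x:ℝ)+(k:ℝ)) := Real.log_le_log (by positivity) h2
    have h4 : (m:ℝ) * (l/2) ≤ 2 * L := by
      calc (m:ℝ) * (l/2) ≤ (m:ℝ) * Real.log k :=
            mul_le_mul_of_nonneg_left hlogk (by positivity)
        _ ≤ 2 * L := h3.trans hlog_xk
    have h5 : (m:ℝ) ≤ 4 * L / l := by
      rw [le_div_iff₀ hlpos]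
      linarith
    have h6 : 4 * L / l = v / 25 := by rw [hvdef]; ring
    linarith
  -- extract good pair
  have hmain : ∃ i j : ℕ, i ≤ k ∧ j ≤ k ∧ Nat.gcd (x + i) (y + j) = 1 := by
    by_contra hcon
    push_neg at hcon
    exact no_bad x y k (by omega) hk_ge hlog hcon
  obtain ⟨i, j, hi, hj, hg⟩ := hmain
  refine ⟨i, j, ?_, ?_, hg⟩
  · calc (i:ℝ) ≤ (k:ℝ) := by exact_mod_cast hi
      _ ≤ v := hk_le_v
      _ = 100 * Real.log x / Real.log (Real.log x) := by rw [hvdef]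
  · calc (j:ℝ) ≤ (k:ℝ) := by exact_mod_cast hj
      _ ≤ v := hk_le_v
      _ = 100 * Real.log x / Real.log (Real.log x) := by rw [hvdef]
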